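/- The Hilbert system Min, obtained from E by adding the axiom schemata D_s: (O p ∧ Ps ¬p) → ⊥ and D_w: (O p ∧ O ¬p) → ⊥, is sound and complete with respect to the class of deontic neighbourhood frames that are both Ps-coherent and Pw-coherent: a formula is a theorem of Min iff it is valid in every such frame. -/

import Mathlib

namespace Deontic

/-- Formulas of the deontic modal language: atoms, falsum, implication,
obligation `O` and strong permission `Ps`. The other Boolean connectives and
weak permission `Pw := ¬O¬` are defined. -/
inductive Form : Type where
  | atom : Nat → Form
  | fls  : Form
  | imp  : Form → Form → Form
  | obl  : Form → Form
  | ps   : Form → Form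

namespace Form
def neg (p : Form) : Form := imp p fls
def or (p q : Form) : Form := imp (neg p) q
def and (p q : Form) : Form := neg (imp p (neg q))
def iff (p q : Form) : Form := and (imp p q) (imp q p)
/-- Weak permission `Pw p := ¬ O ¬ p`. -/
def pw (p : Form) : Form := neg (obl (neg p))
end Form

/-- A deontic neighbourhood frame: a non-empty set of worlds together with
neighbourhood functions for obligation and strong permission. -/
structure Frame : Type 1 where
  W : Type
  ne : Nonempty W
  NO : W → Set (Set W)
  NP : W → Set (Set W)

/-- Truth of a formula at a world of a model (a frame plus valuation `V`). -/
def Truth (F : Frame) (V : Nat → Set F.W) : F.W → Form → Prop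
  | w, .atom n => w ∈ V n
  | _, .fls => False
  | w, .imp p q => Truth F V w p → Truth F V w q
  | w, .obl p => {v | Truth F V v p} ∈ F.NO w
  | w, .ps p => {v | Truth F V v p} ∈ F.NP w

/-- Validity in a frame: truth at every world of every model based on it. -/
def Valid (F : Frame) (p : Form) : Prop := ∀ (V : Nat → Set F.W) (w : F.W), Truth F V w p

/- Frame properties. -/
def PsCoherent (F : Frame) : Prop :=
  ∀ (w : F.W) (X : Set F.W), X ∈ F.NP w → Xᶜ ∉ F.NO w
def PwCoherent (F : Frame) : Prop :=
  ∀ (w : F.W) (X : Set F.W), X ∈ F.NO w → Xᶜ ∉ F.NO w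
def AFCPOPermitted (F : Frame) : Prop :=
  ∀ (w : F.W) (X Y : Set F.W), X ∪ Y ∈ F.NP w → Yᶜ ∈ F.NO w → X ∈ F.NP w
def AFCPPPermitted (F : Frame) : Prop :=
  ∀ (w : F.W) (X Y : Set F.W), X ∪ Y ∈ F.NP w → Xᶜ ∉ F.NO w → Yᶜ ∉ F.NO w →
    X ∈ F.NP w ∧ Y ∈ F.NP w
def AFCP2PPermitted (F : Frame) : Prop :=
  ∀ (w : F.W) (X Y : Set F.W), X ∪ Y ∈ F.NP w → Xᶜ ∉ F.NO w → X ∈ F.NP w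
def IFCPOPermitted (F : Frame) : Prop :=
  ∀ (w : F.W) (X Y Z : Set F.W), X ∪ Y ∈ F.NP w → Z ⊆ Yᶜ → Zᶜ ∈ F.NO w → X ∈ F.NP w
def IFCPPPermitted (F : Frame) : Prop :=
  ∀ (w : F.W) (X Y Z Q : Set F.W), X ∪ Y ∈ F.NP w → Z ⊆ X → Q ⊆ Y →
    Zᶜ ∉ F.NO w → Qᶜ ∉ F.NO w → X ∈ F.NP w ∧ Y ∈ F.NP w
def IFCP2PPermitted (F : Frame) : Prop :=
  ∀ (w : F.W) (X Y Z : Set F.W), X ∪ Y ∈ F.NP w → Z ⊆ X → Zᶜ ∉ F.NO w → X ∈ F.NP w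
def SuppO (F : Frame) : Prop :=
  ∀ (w : F.W) (X Y : Set F.W), X ∩ Y ∈ F.NO w → X ∈ F.NO w ∧ Y ∈ F.NO w
def SuppP (F : Frame) : Prop :=
  ∀ (w : F.W) (X Y : Set F.W), X ∩ Y ∈ F.NP w → X ∈ F.NP w ∧ Y ∈ F.NP w

/-- Flags selecting the extra axiom schemata and inference rules of a system. -/
structure Flags where
  ds : Bool := false
  dw : Bool := false
  afcpo : Bool := false
  afcpp : Bool := false
  afcp2p : Bool := false
  m : Bool := false
  ifcpo : Bool := false
  ifcpp : Bool := false
  ifcp2p : Bool := false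

/-- Hilbert-style provability.  The base system `E` consists of classical
propositional logic (a complete axiomatisation over `→`/`⊥` plus modus ponens)
together with the congruence rule RE for both `O` and `Ps`.  The flags switch
on the further axiom schemata/rules. -/
inductive Prv (S : Flags) : Form → Prop where
  | ax1 (p q : Form) : Prv S (p.imp (q.imp p))
  | ax2 (p q r : Form) :
      Prv S ((p.imp (q.imp r)).imp ((p.imp q).imp (p.imp r)))
  | ax3 (p : Form) : Prv S ((p.neg.neg).imp p)
  | mp {p q : Form} : Prv S (p.imp q) → Prv S p → Prv S q
  | reO {p q : Form} : Prv S (p.iff q) → Prv S ((Form.obl p).iff (Form.obl q))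
  | reP {p q : Form} : Prv S (p.iff q) → Prv S ((Form.ps p).iff (Form.ps q))
  | ds (p : Form) : S.ds = true →
      Prv S (((Form.obl p).and (Form.ps p.neg)).imp Form.fls)
  | dw (p : Form) : S.dw = true →
      Prv S (((Form.obl p).and (Form.obl p.neg)).imp Form.fls)
  | afcpo (p q : Form) : S.afcpo = true →
      Prv S (((Form.ps (p.or q)).and (Form.obl p.neg)).imp (Form.ps q))
  | afcpp (p q : Form) : S.afcpp = true →
      Prv S (((Form.ps (p.or q)).and ((p.pw).and q.pw)).imp
        ((Form.ps p).and (Form.ps q)))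
  | afcp2p (p q : Form) : S.afcp2p = true →
      Prv S (((Form.ps (p.or q)).and p.pw).imp (Form.ps p))
  | mO (p q : Form) : S.m = true →
      Prv S ((Form.obl (p.and q)).imp ((Form.obl p).and (Form.obl q)))
  | mP (p q : Form) : S.m = true →
      Prv S ((Form.ps (p.and q)).imp ((Form.ps p).and (Form.ps q)))
  | ifcpo {p q r : Form} : S.ifcpo = true →
      Prv S ((Form.ps (p.or q)).and (Form.obl r)) →
      Prv S (r.imp p.neg) → Prv S (Form.ps q)
  | ifcpp {p q r s : Form} : S.ifcpp = true →
      Prv S ((Form.ps (p.or q)).and ((r.pw).and s.pw)) →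
      Prv S (r.imp p) → Prv S (s.imp q) →
      Prv S ((Form.ps p).and (Form.ps q))
  | ifcp2p {p q r : Form} : S.ifcp2p = true →
      Prv S ((Form.ps (p.or q)).and r.pw) →
      Prv S (r.imp p) → Prv S (Form.ps p)

def SysE : Flags := {}
def SysMin : Flags := { ds := true, dw := true }
def SysFCP1 : Flags := { ds := true, dw := true, ifcpo := true, ifcpp := true }
def SysFCP2 : Flags := { ds := true, dw := true, afcpo := true, afcpp := true }
def SysFCP3 : Flags := { ds := true, dw := true, afcpo := true, afcpp := true, m := true }
def SysFCP4 : Flags := { ds := true, dw := true, afcpo := true, afcp2p := true }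
def SysFCP5 : Flags := { ds := true, dw := true, ifcpo := true, ifcp2p := true }
def SysFCP6 : Flags := { ds := true, dw := true, afcpo := true, afcp2p := true, m := true }

/- ## Auxiliary development -/

theorem prv_id (S : Flags) (p : Form) : Prv S (p.imp p) :=
  ((Prv.ax2 p (p.imp p) p).mp (Prv.ax1 p (p.imp p))).mp (Prv.ax1 p p)

/-- Provability from a set of hypotheses. -/
inductive PrvH (S : Flags) (Γ : Set Form) : Form → Prop where
  | hyp {p} : p ∈ Γ → PrvH S Γ p
  | thm {p} : Prv S p → PrvH S Γ p
  | mp {p q} : PrvH S Γ (p.imp q) → PrvH S Γ p → PrvH S Γ q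

theorem PrvH.weaken {S : Flags} {Γ Δ : Set Form} {p : Form}
    (h : PrvH S Γ p) (hs : Γ ⊆ Δ) : PrvH S Δ p := by
  induction h with
  | hyp h => exact .hyp (hs h)
  | thm h => exact .thm h
  | mp _ _ ih1 ih2 => exact .mp ih1 ih2

theorem deduction {S : Flags} {Γ : Set Form} {p q : Form}
    (h : PrvH S (insert p Γ) q) : PrvH S Γ (p.imp q) := by
  induction h with
  | @hyp r hr =>
    rcases hr with rfl | hr
    · exact .thm (prv_id S _)
    · exact .mp (.thm (Prv.ax1 r p)) (.hyp hr)
  | @thm r hr => exact .mp (.thm (Prv.ax1 r p)) (.thm hr)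
  | @mp r s _ _ ih1 ih2 => exact .mp (.mp (.thm (Prv.ax2 p r s)) ih1) ih2

theorem prv_of_prvH {S : Flags} {p : Form} (h : PrvH S ∅ p) : Prv S p := by
  induction h with
  | hyp h => exact absurd h (Set.notMem_empty _)
  | thm h => exact h
  | mp _ _ ih1 ih2 => exact ih1.mp ih2

theorem PrvH.dne {S : Flags} {Γ : Set Form} {p : Form}
    (h : PrvH S Γ p.neg.neg) : PrvH S Γ p := .mp (.thm (Prv.ax3 p)) h

theorem prv_efq (S : Flags) (p : Form) : Prv S (Form.fls.imp p) := by
  apply prv_of_prvH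
  apply deduction
  exact PrvH.dne (.mp (.thm (Prv.ax1 .fls p.neg)) (.hyp (Set.mem_insert _ _)))

theorem PrvH.ofInsertNeg {S : Flags} {Γ : Set Form} {p : Form}
    (h : PrvH S (insert p.neg Γ) .fls) : PrvH S Γ p :=
  (deduction h).dne

theorem prv_and_intro (S : Flags) (p q : Form) :
    Prv S (p.imp (q.imp (p.and q))) := by
  apply prv_of_prvH
  apply deduction; apply deduction; apply deduction
  have h1 : PrvH S (insert (p.imp q.neg) (insert q (insert p ∅))) (p.imp q.neg) :=
    .hyp (Set.mem_insert _ _)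
  have h2 : PrvH S (insert (p.imp q.neg) (insert q (insert p ∅))) p :=
    .hyp (Set.mem_insert_of_mem _ (Set.mem_insert_of_mem _ (Set.mem_insert _ _)))
  have h3 : PrvH S (insert (p.imp q.neg) (insert q (insert p ∅))) q :=
    .hyp (Set.mem_insert_of_mem _ (Set.mem_insert _ _))
  exact (h1.mp h2).mp h3

theorem PrvH.andI {S : Flags} {Γ : Set Form} {p q : Form}
    (hp : PrvH S Γ p) (hq : PrvH S Γ q) : PrvH S Γ (p.and q) :=
  .mp (.mp (.thm (prv_and_intro S p q)) hp) hq

theorem PrvH.andL {S : Flags} {Γ : Set Form} {p q : Form}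
    (h : PrvH S Γ (p.and q)) : PrvH S Γ p := by
  apply PrvH.ofInsertNeg
  have hand : PrvH S (insert p.neg Γ) ((p.imp q.neg).imp .fls) :=
    h.weaken (Set.subset_insert _ _)
  have himp : PrvH S (insert p.neg Γ) (p.imp q.neg) := by
    apply deduction
    have hp : PrvH S (insert p (insert p.neg Γ)) p := .hyp (Set.mem_insert _ _)
    have hnp : PrvH S (insert p (insert p.neg Γ)) p.neg :=
      .hyp (Set.mem_insert_of_mem _ (Set.mem_insert _ _))
    exact .mp (.thm (prv_efq S q.neg)) (hnp.mp hp)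
  exact hand.mp himp

theorem PrvH.andR {S : Flags} {Γ : Set Form} {p q : Form}
    (h : PrvH S Γ (p.and q)) : PrvH S Γ q := by
  apply PrvH.ofInsertNeg
  have hand : PrvH S (insert q.neg Γ) ((p.imp q.neg).imp .fls) :=
    h.weaken (Set.subset_insert _ _)
  have himp : PrvH S (insert q.neg Γ) (p.imp q.neg) :=
    .mp (.thm (Prv.ax1 q.neg p)) (.hyp (Set.mem_insert _ _))
  exact hand.mp himp

theorem prv_iff_intro {S : Flags} {p q : Form}
    (h1 : Prv S (p.imp q)) (h2 : Prv S (q.imp p)) : Prv S (p.iff q) :=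
  prv_of_prvH (PrvH.andI (.thm h1) (.thm h2))

theorem prv_iff_mp {S : Flags} {p q : Form} (h : Prv S (p.iff q)) :
    Prv S (p.imp q) := prv_of_prvH (PrvH.andL (.thm h))

theorem prv_iff_mpr {S : Flags} {p q : Form} (h : Prv S (p.iff q)) :
    Prv S (q.imp p) := prv_of_prvH (PrvH.andR (.thm h))

theorem prv_dn (S : Flags) (p : Form) : Prv S (p.iff p.neg.neg) := by
  refine prv_iff_intro ?_ (Prv.ax3 p)
  apply prv_of_prvH; apply deduction; apply deduction
  have h1 : PrvH S (insert p.neg (insert p ∅)) p.neg := .hyp (Set.mem_insert _ _)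
  have h2 : PrvH S (insert p.neg (insert p ∅)) p :=
    .hyp (Set.mem_insert_of_mem _ (Set.mem_insert _ _))
  exact h1.mp h2

/- ### Consistent and maximal consistent sets -/

def Consistent (S : Flags) (Γ : Set Form) : Prop := ¬ PrvH S Γ Form.fls

def MCS (S : Flags) (Γ : Set Form) : Prop :=
  Consistent S Γ ∧ ∀ Δ, Consistent S Δ → Γ ⊆ Δ → Δ ⊆ Γ

theorem MCS.mem_of_prvH {S : Flags} {Γ : Set Form} {p : Form}
    (h : MCS S Γ) (hp : PrvH S Γ p) : p ∈ Γ := by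
  by_cases hmem : p ∈ Γ
  · exact hmem
  · exfalso
    have hinc : ¬ Consistent S (insert p Γ) := by
      intro hc
      exact hmem (h.2 _ hc (Set.subset_insert _ _) (Set.mem_insert _ _))
    have : PrvH S (insert p Γ) Form.fls := by
      by_contra hne; exact hinc hne
    exact h.1 ((deduction this).mp hp)

theorem MCS.neg_mem {S : Flags} {Γ : Set Form} {p : Form} (h : MCS S Γ) :
    p.neg ∈ Γ ↔ p ∉ Γ := by
  constructor
  · intro hn hp
    exact h.1 ((PrvH.hyp hn).mp (PrvH.hyp hp))
  · intro hp
    apply h.mem_of_prvH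
    apply deduction
    have hinc : ¬ Consistent S (insert p Γ) := by
      intro hc
      exact hp (h.2 _ hc (Set.subset_insert _ _) (Set.mem_insert _ _))
    by_contra hne; exact hinc hne

theorem MCS.fls_not_mem {S : Flags} {Γ : Set Form} (h : MCS S Γ) :
    Form.fls ∉ Γ := fun hf => h.1 (.hyp hf)

theorem MCS.imp_mem {S : Flags} {Γ : Set Form} {p q : Form} (h : MCS S Γ) :
    p.imp q ∈ Γ ↔ (p ∈ Γ → q ∈ Γ) := by
  constructor
  · intro hi hp
    exact h.mem_of_prvH ((PrvH.hyp hi).mp (.hyp hp))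
  · intro hi
    by_cases hp : p ∈ Γ
    · exact h.mem_of_prvH (.mp (.thm (Prv.ax1 q p)) (.hyp (hi hp)))
    · have hn : p.neg ∈ Γ := h.neg_mem.mpr hp
      apply h.mem_of_prvH
      apply deduction
      have h1 : PrvH S (insert p Γ) p.neg :=
        .hyp (Set.mem_insert_of_mem _ hn)
      have h2 : PrvH S (insert p Γ) p := .hyp (Set.mem_insert _ _)
      exact .mp (.thm (prv_efq S q)) (h1.mp h2)

theorem MCS.mem_iff_of_iff {S : Flags} {Γ : Set Form} {a b : Form} (h : MCS S Γ)
    (hab : Prv S (a.iff b)) : a ∈ Γ ↔ b ∈ Γ := by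
  constructor
  · intro ha; exact h.mem_of_prvH (.mp (.thm (prv_iff_mp hab)) (.hyp ha))
  · intro hb; exact h.mem_of_prvH (.mp (.thm (prv_iff_mpr hab)) (.hyp hb))

theorem PrvH.compact {S : Flags} {Γ : Set Form} {p : Form} (h : PrvH S Γ p) :
    ∃ Δ, Δ ⊆ Γ ∧ Δ.Finite ∧ PrvH S Δ p := by
  induction h with
  | @hyp q hq => exact ⟨{q}, by simpa, Set.finite_singleton _, .hyp rfl⟩
  | thm h => exact ⟨∅, by simp, Set.finite_empty, .thm h⟩
  | mp _ _ ih1 ih2 =>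
    obtain ⟨D1, s1, f1, h1⟩ := ih1
    obtain ⟨D2, s2, f2, h2⟩ := ih2
    exact ⟨D1 ∪ D2, Set.union_subset s1 s2, f1.union f2,
      .mp (h1.weaken Set.subset_union_left) (h2.weaken Set.subset_union_right)⟩

theorem finite_subset_chain {c : Set (Set Form)} (hc : IsChain (· ⊆ ·) c)
    (hne : c.Nonempty) {D : Set Form} (hf : D.Finite) (hsub : D ⊆ ⋃₀ c) :
    ∃ Γ ∈ c, D ⊆ Γ := by
  classical
  refine Set.Finite.induction_on (motive := fun D _ => D ⊆ ⋃₀ c → ∃ Γ ∈ c, D ⊆ Γ)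
    D hf (fun _ => ⟨hne.choose, hne.choose_spec, by simp⟩) ?_ hsub
  intro a s ha hs ih hsub'
  · obtain ⟨Γ, hΓ, hsΓ⟩ := ih (fun x hx => hsub' (Set.mem_insert_of_mem _ hx))
    obtain ⟨Γ', hΓ', haΓ'⟩ := hsub' (Set.mem_insert a s)
    rcases hc.total hΓ hΓ' with h | h
    · exact ⟨Γ', hΓ', Set.insert_subset haΓ' (hsΓ.trans h)⟩
    · exact ⟨Γ, hΓ, Set.insert_subset (h haΓ') hsΓ⟩

theorem lindenbaum {S : Flags} {Γ : Set Form} (h : Consistent S Γ) :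
    ∃ Δ, Γ ⊆ Δ ∧ MCS S Δ := by
  obtain ⟨Δ, hsub, hmax⟩ := zorn_subset_nonempty {Δ | Consistent S Δ}
    (fun c hcS hchain hcne => by
      refine ⟨⋃₀ c, ?_, fun s hs => Set.subset_sUnion_of_mem hs⟩
      intro hfls
      obtain ⟨D, hD, hDf, hDp⟩ := hfls.compact
      obtain ⟨Γ', hΓ', hDΓ'⟩ := finite_subset_chain hchain hcne hDf hD
      exact hcS hΓ' (hDp.weaken hDΓ')) Γ h
  exact ⟨Δ, hsub, hmax.1, fun Δ' hΔ' hsub' => hmax.2 hΔ' hsub'⟩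

/- ### Soundness -/

theorem truth_and {F : Frame} {V : Nat → Set F.W} {w : F.W} {p q : Form} :
    Truth F V w (p.and q) ↔ Truth F V w p ∧ Truth F V w q := by
  simp only [Form.and, Form.neg, Truth]
  tauto

theorem truth_iff {F : Frame} {V : Nat → Set F.W} {w : F.W} {p q : Form} :
    Truth F V w (p.iff q) ↔ (Truth F V w p ↔ Truth F V w q) := by
  simp only [Form.iff, truth_and, Truth]
  tauto

theorem sound {p : Form} (h : Prv SysMin p) :
    ∀ F : Frame, PsCoherent F → PwCoherent F → Valid F p := by
  induction h with
  | ax1 p q => intro F _ _ V w; intro hp _; exact hp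
  | ax2 p q r =>
    intro F _ _ V w
    intro h1 h2 h3
    exact h1 h3 (h2 h3)
  | ax3 p =>
    intro F _ _ V w
    show ((Truth F V w p → False) → False) → Truth F V w p
    intro h
    by_contra hn
    exact h hn
  | mp _ _ ih1 ih2 =>
    intro F hps hpw V w
    exact ih1 F hps hpw V w (ih2 F hps hpw V w)
  | @reO p q _ ih =>
    intro F hps hpw V w
    have hset : {v | Truth F V v p} = {v | Truth F V v q} :=
      Set.ext fun v => truth_iff.mp (ih F hps hpw V v)
    rw [truth_iff]
    show {v | Truth F V v p} ∈ F.NO w ↔ {v | Truth F V v q} ∈ F.NO w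
    rw [hset]
  | @reP p q _ ih =>
    intro F hps hpw V w
    have hset : {v | Truth F V v p} = {v | Truth F V v q} :=
      Set.ext fun v => truth_iff.mp (ih F hps hpw V v)
    rw [truth_iff]
    show {v | Truth F V v p} ∈ F.NP w ↔ {v | Truth F V v q} ∈ F.NP w
    rw [hset]
  | ds p _ =>
    intro F hps hpw V w
    intro hand
    rcases truth_and.mp hand with ⟨ho, hp⟩
    have ho : {v | Truth F V v p} ∈ F.NO w := ho
    have hp : {v | Truth F V v p.neg} ∈ F.NP w := hp
    have hc : {v | Truth F V v p.neg} = {v | Truth F V v p}ᶜ := by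
      ext v
      simp only [Form.neg, Truth, Set.mem_compl_iff, Set.mem_setOf_eq]
    rw [hc] at hp
    exact (hps w _ hp) (by rwa [compl_compl])
  | dw p _ =>
    intro F hps hpw V w
    intro hand
    rcases truth_and.mp hand with ⟨ho, hn⟩
    have ho : {v | Truth F V v p} ∈ F.NO w := ho
    have hn : {v | Truth F V v p.neg} ∈ F.NO w := hn
    have hc : {v | Truth F V v p.neg} = {v | Truth F V v p}ᶜ := by
      ext v
      simp only [Form.neg, Truth, Set.mem_compl_iff, Set.mem_setOf_eq]
    rw [hc] at hn
    exact (hpw w _ ho) hn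
  | afcpo p q h => simp [SysMin] at h
  | afcpp p q h => simp [SysMin] at h
  | afcp2p p q h => simp [SysMin] at h
  | mO p q h => simp [SysMin] at h
  | mP p q h => simp [SysMin] at h
  | ifcpo h _ _ _ _ => simp [SysMin] at h
  | ifcpp h _ _ _ _ _ _ => simp [SysMin] at h
  | ifcp2p h _ _ _ _ => simp [SysMin] at h

/- ### The canonical model -/

theorem consistent_empty : Consistent SysMin (∅ : Set Form) := by
  intro h
  have hf : Prv SysMin Form.fls := prv_of_prvH h
  have := sound hf ⟨PUnit, ⟨PUnit.unit⟩, fun _ => ∅, fun _ => ∅⟩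
    (fun _ X hX => absurd hX (Set.notMem_empty _))
    (fun _ X hX => absurd hX (Set.notMem_empty _))
    (fun _ => ∅) PUnit.unit
  exact this

def CanW : Type := {Γ : Set Form // MCS SysMin Γ}

def pset (p : Form) : Set CanW := {Δ | p ∈ Δ.1}

theorem canW_nonempty : Nonempty CanW := by
  obtain ⟨Δ, _, hΔ⟩ := lindenbaum consistent_empty
  exact ⟨⟨Δ, hΔ⟩⟩

def canF : Frame where
  W := CanW
  ne := canW_nonempty
  NO := fun Γ => {X | ∃ p, Form.obl p ∈ Γ.1 ∧ X = pset p}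
  NP := fun Γ => {X | ∃ p, Form.ps p ∈ Γ.1 ∧ X = pset p}

def canV : Nat → Set canF.W := fun n => {Δ | Form.atom n ∈ Δ.1}

theorem prv_iff_of_pset_eq {p q : Form} (h : pset p = pset q) :
    Prv SysMin (p.iff q) := by
  have half : ∀ a b : Form, pset a = pset b → Prv SysMin (a.imp b) := by
    intro a b hab
    by_contra hn
    have hcon : Consistent SysMin (insert b.neg (insert a ∅)) := by
      intro hf
      exact hn (prv_of_prvH (deduction (PrvH.ofInsertNeg hf)))
    obtain ⟨Δ, hsub, hΔ⟩ := lindenbaum hcon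
    have ha : a ∈ Δ := hsub (Set.mem_insert_of_mem _ (Set.mem_insert _ _))
    have hnb : b.neg ∈ Δ := hsub (Set.mem_insert _ _)
    have hb : b ∈ Δ := by
      have : (⟨Δ, hΔ⟩ : CanW) ∈ pset a := ha
      rw [hab] at this
      exact this
    exact (hΔ.neg_mem.mp hnb) hb
  exact prv_iff_intro (half p q h) (half q p h.symm)

theorem pset_compl (p : Form) : (pset p)ᶜ = pset p.neg := by
  ext Δ
  simp only [Set.mem_compl_iff, pset, Set.mem_setOf_eq]
  exact (MCS.neg_mem Δ.2).symm

theorem can_psCoherent : PsCoherent canF := by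
  rintro Γ X ⟨p, hp, rfl⟩ ⟨q, hq, hEq⟩
  -- hEq : (pset p)ᶜ = pset q, hq : obl q ∈ Γ.1, hp : ps p ∈ Γ.1
  replace hEq : pset p.neg = pset q := (pset_compl p).symm.trans hEq
  have hiff : Prv SysMin (p.neg.iff q) := prv_iff_of_pset_eq hEq
  have honp : Form.obl p.neg ∈ Γ.1 :=
    (Γ.2.mem_iff_of_iff (Prv.reO hiff)).mpr hq
  have hpnn : Form.ps p.neg.neg ∈ Γ.1 :=
    (Γ.2.mem_iff_of_iff (Prv.reP (prv_dn SysMin p))).mp hp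
  have hds : Prv SysMin (((Form.obl p.neg).and (Form.ps p.neg.neg)).imp Form.fls) :=
    Prv.ds p.neg rfl
  exact Γ.2.1 (PrvH.mp (.thm hds) (PrvH.andI (.hyp honp) (.hyp hpnn)))

theorem can_pwCoherent : PwCoherent canF := by
  rintro Γ X ⟨p, hp, rfl⟩ ⟨q, hq, hEq⟩
  replace hEq : pset p.neg = pset q := (pset_compl p).symm.trans hEq
  have hiff : Prv SysMin (p.neg.iff q) := prv_iff_of_pset_eq hEq
  have honp : Form.obl p.neg ∈ Γ.1 :=
    (Γ.2.mem_iff_of_iff (Prv.reO hiff)).mpr hq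
  have hdw : Prv SysMin (((Form.obl p).and (Form.obl p.neg)).imp Form.fls) :=
    Prv.dw p rfl
  exact Γ.2.1 (PrvH.mp (.thm hdw) (PrvH.andI (.hyp hp) (.hyp honp)))

theorem truth_lemma (p : Form) : ∀ Γ : canF.W, Truth canF canV Γ p ↔ p ∈ Γ.1 := by
  induction p with
  | atom n => intro Γ; exact Iff.rfl
  | fls =>
    intro Γ
    simp only [Truth]
    exact ⟨fun h => h.elim, fun h => Γ.2.fls_not_mem h⟩
  | imp p q ihp ihq =>
    intro Γ
    simp only [Truth, ihp, ihq]
    exact (Γ.2.imp_mem).symm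
  | obl p ih =>
    intro Γ
    have hps : {v : canF.W | Truth canF canV v p} = pset p := Set.ext fun v => ih v
    show {v : canF.W | Truth canF canV v p} ∈ canF.NO Γ ↔ _
    rw [hps]
    constructor
    · rintro ⟨q, hq, hEq⟩
      have hiff : Prv SysMin (p.iff q) := prv_iff_of_pset_eq hEq
      exact (Γ.2.mem_iff_of_iff (Prv.reO hiff)).mpr hq
    · intro h
      exact ⟨p, h, rfl⟩
  | ps p ih =>
    intro Γ
    have hps : {v : canF.W | Truth canF canV v p} = pset p := Set.ext fun v => ih v
    show {v : canF.W | Truth canF canV v p} ∈ canF.NP Γ ↔ _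
    rw [hps]
    constructor
    · rintro ⟨q, hq, hEq⟩
      have hiff : Prv SysMin (p.iff q) := prv_iff_of_pset_eq hEq
      exact (Γ.2.mem_iff_of_iff (Prv.reP hiff)).mpr hq
    · intro h
      exact ⟨p, h, rfl⟩

/-- Soundness and completeness of the system `Min = E ⊕ D_s ⊕ D_w` with
respect to the class of deontic neighbourhood frames that are both
`Ps`-coherent and `Pw`-coherent. -/
theorem Min_sound_complete :
    ∀ p : Form,
      Prv SysMin p ↔ ∀ F : Frame, PsCoherent F → PwCoherent F → Valid F p := by
  intro p
  constructor
  · exact sound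
  · intro h
    by_contra hn
    have hcon : Consistent SysMin (insert p.neg ∅) := by
      intro hf
      exact hn (prv_of_prvH (PrvH.ofInsertNeg hf))
    obtain ⟨Δ, hsub, hΔ⟩ := lindenbaum hcon
    have hnp : p.neg ∈ Δ := hsub (Set.mem_insert _ _)
    have hp : p ∈ Δ := (truth_lemma p ⟨Δ, hΔ⟩).mp
      (h canF can_psCoherent can_pwCoherent canV ⟨Δ, hΔ⟩)
    exact (hΔ.neg_mem.mp hnp) hp

end Deontic
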